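/- Let F, G be m×m complex matrices with det(sF − G) not identically zero, and suppose there exist invertible P, Q with PFQ = diag(I_p, H_q) and PGQ = diag(J_p, I_q), where H_q is nilpotent. Then every sequence (Y_k)_{k≥0} in ℂ^m satisfying F Y_{k+1} = G Y_k for all k ≥ 0 is of the form Y_k = Q_p J_p^k C for some constant C ∈ ℂ^p, where Q = [Q_p Q_q] is the column partition of Q. -/
import Mathlib


open Matrix

theorem weierstrass_solution_form
    (p q : ℕ) (F G P Q : Matrix (Fin p ⊕ Fin q) (Fin p ⊕ Fin q) ℂ)
    (hreg : ∃ s : ℂ, (s • F - G).det ≠ 0)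
    (hP : IsUnit P.det) (hQ : IsUnit Q.det)
    (J : Matrix (Fin p) (Fin p) ℂ) (H : Matrix (Fin q) (Fin q) ℂ)
    (hH : IsNilpotent H)
    (hF : P * F * Q = Matrix.fromBlocks 1 0 0 H)
    (hG : P * G * Q = Matrix.fromBlocks J 0 0 1)
    (Y : ℕ → Fin p ⊕ Fin q → ℂ)
    (hY : ∀ k : ℕ, F.mulVec (Y (k + 1)) = G.mulVec (Y k)) :
    ∃ C : Fin p → ℂ, ∀ k : ℕ,
      Y k = (Q.submatrix id (Sum.inl : Fin p → Fin p ⊕ Fin q) * J ^ k).mulVec C := by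
  obtain ⟨n, hn⟩ := hH
  set Z : ℕ → Fin p ⊕ Fin q → ℂ := fun k => Q⁻¹.mulVec (Y k) with hZ
  have hQZ : ∀ k, Q.mulVec (Z k) = Y k := by
    intro k
    simp [hZ, Matrix.mulVec_mulVec, Matrix.mul_nonsing_inv Q hQ]
  have key : ∀ k, (Matrix.fromBlocks (1 : Matrix (Fin p) (Fin p) ℂ) 0 0 H).mulVec (Z (k+1))
      = (Matrix.fromBlocks J 0 0 (1 : Matrix (Fin q) (Fin q) ℂ)).mulVec (Z k) := by
    intro k
    rw [← hF, ← hG]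
    have h1 : (P * F * Q).mulVec (Z (k+1)) = P.mulVec (F.mulVec (Y (k+1))) := by
      rw [← hQZ (k+1)]
      simp [Matrix.mulVec_mulVec, Matrix.mul_assoc]
    have h2 : (P * G * Q).mulVec (Z k) = P.mulVec (G.mulVec (Y k)) := by
      rw [← hQZ k]
      simp [Matrix.mulVec_mulVec, Matrix.mul_assoc]
    rw [h1, h2, hY k]
  have hu : ∀ k, Z (k+1) ∘ Sum.inl = J.mulVec (Z k ∘ Sum.inl) := by
    intro k
    have h := key k
    rw [← Sum.elim_comp_inl_inr (Z (k+1)), ← Sum.elim_comp_inl_inr (Z k),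
      Matrix.fromBlocks_mulVec, Matrix.fromBlocks_mulVec] at h
    have := congrFun h
    funext i
    have h' := this (Sum.inl i)
    simpa using h'
  have hv : ∀ k, H.mulVec (Z (k+1) ∘ Sum.inr) = Z k ∘ Sum.inr := by
    intro k
    have h := key k
    rw [← Sum.elim_comp_inl_inr (Z (k+1)), ← Sum.elim_comp_inl_inr (Z k),
      Matrix.fromBlocks_mulVec, Matrix.fromBlocks_mulVec] at h
    have := congrFun h
    funext i
    have h' := this (Sum.inr i)
    simpa using h'
  have hvpow : ∀ j k, Z k ∘ Sum.inr = (H ^ j).mulVec (Z (k + j) ∘ Sum.inr) := by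
    intro j
    induction j with
    | zero => intro k; simp
    | succ j ih =>
      intro k
      have : (H ^ (j+1)).mulVec (Z (k + (j+1)) ∘ Sum.inr)
          = (H ^ j).mulVec (H.mulVec (Z (k + j + 1) ∘ Sum.inr)) := by
        rw [Matrix.mulVec_mulVec, ← pow_succ]
        ring_nf
      rw [this, hv (k + j), ← ih k]
  have hv0 : ∀ k, Z k ∘ Sum.inr = 0 := by
    intro k
    rw [hvpow n k, hn]
    simp
  have hu0 : ∀ k, Z k ∘ Sum.inl = (J ^ k).mulVec (Z 0 ∘ Sum.inl) := by
    intro k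
    induction k with
    | zero => simp
    | succ k ih =>
      rw [hu k, ih, Matrix.mulVec_mulVec, ← pow_succ']
  refine ⟨Z 0 ∘ Sum.inl, fun k => ?_⟩
  rw [← hQZ k, ← Sum.elim_comp_inl_inr (Z k), hu0 k, hv0 k]
  funext i
  rw [← Matrix.mulVec_mulVec]
  simp [Matrix.mulVec, dotProduct, Fintype.sum_sum_type, Matrix.submatrix]
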